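/- Let 𝒜 and ℬ be almost disjoint families on ω of size κ with cf(κ) > ω, and let h : 𝒜 → ℬ be a bijection of dense oscillation. Then there is no homeomorphism from Ψ(𝒜) to Ψ(ℬ) whose restriction to 𝒜 equals h. -/

import Mathlib

open Set Cardinal

/-- An almost disjoint family on ω. -/
def ADFamily (𝒜 : Set (Set ℕ)) : Prop :=
  𝒜.Infinite ∧ (∀ A ∈ 𝒜, A.Infinite) ∧
    ∀ A ∈ 𝒜, ∀ B ∈ 𝒜, A ≠ B → (A ∩ B).Finite

/-- The Ψ-space topology on ℕ ⊕ 𝒜. -/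
def psiTop (𝒜 : Set (Set ℕ)) : TopologicalSpace (ℕ ⊕ ↥𝒜) :=
  TopologicalSpace.generateFrom
    ({U | ∃ n : ℕ, U = {Sum.inl n}} ∪
     {U | ∃ (A : ↥𝒜) (F : Finset ℕ),
        U = insert (Sum.inr A) (Sum.inl '' ((A : Set ℕ) \ ↑F))})

/-- A bijection h : 𝒜 → ℬ is of dense oscillation if for every 𝒜' ⊆ 𝒜 of size κ
there are x, y, z ∈ 𝒜' with |(x ∩ z) \ (x ∩ y)| ≠ |(h(x) ∩ h(z)) \ (h(x) ∩ h(y))|. -/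
def DenseOscillation {𝒜 ℬ : Set (Set ℕ)} (κ : Cardinal) (h : ↥𝒜 → ↥ℬ) : Prop :=
  ∀ 𝒜' : Set ↥𝒜, Cardinal.mk ↥𝒜' = κ →
    ∃ x ∈ 𝒜', ∃ y ∈ 𝒜', ∃ z ∈ 𝒜',
      Cardinal.mk ↥(((x : Set ℕ) ∩ (z : Set ℕ)) \ ((x : Set ℕ) ∩ (y : Set ℕ))) ≠
      Cardinal.mk ↥(((h x : Set ℕ) ∩ (h z : Set ℕ)) \ ((h x : Set ℕ) ∩ (h y : Set ℕ)))

/-- Every open set containing `Sum.inr A` contains a basic neighborhood tail of `A`. -/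
lemma psi_nbhd {𝒜 : Set (Set ℕ)} (A : ↥𝒜) {U : Set (ℕ ⊕ ↥𝒜)}
    (hU : (psiTop 𝒜).IsOpen U) (hA : Sum.inr A ∈ U) :
    ∃ F : Finset ℕ, Sum.inl '' ((A : Set ℕ) \ ↑F) ⊆ U := by
  have hU' : TopologicalSpace.GenerateOpen
      ({U | ∃ n : ℕ, U = {Sum.inl n}} ∪
       {U | ∃ (A : ↥𝒜) (F : Finset ℕ),
          U = insert (Sum.inr A) (Sum.inl '' ((A : Set ℕ) \ ↑F))}) U := hU
  clear hU
  revert hA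
  induction hU' with
  | basic V hV =>
      intro hA
      rcases hV with ⟨n, rfl⟩ | ⟨B, F, rfl⟩
      · simp at hA
      · have hAB : A = B := by
          rcases hA with h1 | h1
          · exact Sum.inr_injective h1
          · rcases h1 with ⟨m, _, hm⟩; cases hm
        subst hAB
        exact ⟨F, fun x hx => Or.inr hx⟩
  | univ => exact fun _ => ⟨∅, fun x _ => trivial⟩
  | inter U V hUo hVo ihU ihV =>
      rintro ⟨hA1, hA2⟩
      obtain ⟨F1, hF1⟩ := ihU hA1
      obtain ⟨F2, hF2⟩ := ihV hA2
      refine ⟨F1 ∪ F2, ?_⟩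
      rintro x ⟨m, ⟨hmA, hmF⟩, rfl⟩
      simp only [Finset.coe_union, Set.mem_union, not_or] at hmF
      exact ⟨hF1 ⟨m, ⟨hmA, hmF.1⟩, rfl⟩, hF2 ⟨m, ⟨hmA, hmF.2⟩, rfl⟩⟩
  | sUnion S hS ih =>
      rintro ⟨V, hVS, hAV⟩
      obtain ⟨F, hF⟩ := ih V hVS hAV
      exact ⟨F, hF.trans (subset_sUnion_of_mem hVS)⟩

/-- Pigeonhole: a map into a countable set from a set of size κ with cf κ > ω
has a fiber of full size. -/
lemma exists_big_fiber {S C : Type} [Countable C] {κ : Cardinal}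
    (hcf : Cardinal.aleph0 < κ.ord.cof) (hS : Cardinal.mk S = κ) (f : S → C) :
    ∃ c, Cardinal.mk ↥(f ⁻¹' {c}) = κ := by
  by_contra hcon
  push_neg at hcon
  have hκ : Cardinal.aleph0 < κ := hcf.trans_le (Ordinal.cof_ord_le κ)
  have hlt : ∀ c, #↥(f ⁻¹' {c}) < κ := fun c =>
    lt_of_le_of_ne (hS ▸ Cardinal.mk_subtype_le _) (hcon c)
  have huniv : (⋃ c, f ⁻¹' {c}) = Set.univ := by
    ext x; simp only [Set.mem_iUnion, Set.mem_preimage, Set.mem_singleton_iff, Set.mem_univ,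
      iff_true]
    exact ⟨f x, rfl⟩
  have h1 : κ ≤ Cardinal.sum fun c => #↥(f ⁻¹' {c}) := by
    calc κ = #S := hS.symm
    _ = #↥(Set.univ : Set S) := Cardinal.mk_univ.symm
    _ = #↥(⋃ c, f ⁻¹' {c}) := by rw [huniv]
    _ ≤ _ := Cardinal.mk_iUnion_le_sum_mk
  have h2 : (Cardinal.sum fun c => #↥(f ⁻¹' {c})) < κ := by
    refine (Cardinal.sum_le_mk_mul_iSup _).trans_lt ?_
    refine Cardinal.mul_lt_of_lt hκ.le ((Cardinal.mk_le_aleph0).trans_lt hκ) ?_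
    exact Ordinal.iSup_lt ((Cardinal.mk_le_aleph0).trans_lt hcf) hlt
  exact absurd (h1.trans_lt h2) (lt_irrefl κ)

lemma key_sets {n : ℕ} {s t : Set ℕ} {X Y Z X' Y' Z' : Set ℕ}
    (hX : X ∩ Set.Iio n = s) (hY : Y ∩ Set.Iio n = s) (hZ : Z ∩ Set.Iio n = s)
    (hX' : X' ∩ Set.Iio n = t) (hY' : Y' ∩ Set.Iio n = t) (hZ' : Z' ∩ Set.Iio n = t)
    (dX : X \ Set.Iio n = X' \ Set.Iio n) (dY : Y \ Set.Iio n = Y' \ Set.Iio n)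
    (dZ : Z \ Set.Iio n = Z' \ Set.Iio n) :
    (X ∩ Z) \ (X ∩ Y) = (X' ∩ Z') \ (X' ∩ Y') := by
  have low : ∀ {W u : Set ℕ}, W ∩ Set.Iio n = u → ∀ {a : ℕ}, a < n → (a ∈ W ↔ a ∈ u) := by
    intro W u hWu a ha
    constructor
    · intro h; rw [← hWu]; exact ⟨h, ha⟩
    · intro h; rw [← hWu] at h; exact h.1
  have high : ∀ {W W' : Set ℕ}, W \ Set.Iio n = W' \ Set.Iio n →
      ∀ {a : ℕ}, ¬ a < n → (a ∈ W ↔ a ∈ W') := by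
    intro W W' hWW a ha
    constructor
    · intro h
      have : a ∈ W' \ Set.Iio n := hWW ▸ ⟨h, ha⟩
      exact this.1
    · intro h
      have : a ∈ W \ Set.Iio n := hWW ▸ ⟨h, ha⟩
      exact this.1
  ext a
  by_cases ha : a < n
  · constructor
    · rintro ⟨⟨haX, _⟩, hno⟩
      exact absurd ⟨haX, (low hY ha).mpr ((low hX ha).mp haX)⟩ hno
    · rintro ⟨⟨haX, _⟩, hno⟩
      exact absurd ⟨haX, (low hY' ha).mpr ((low hX' ha).mp haX)⟩ hno
  · constructor
    · rintro ⟨⟨haX, haZ⟩, hno⟩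
      refine ⟨⟨(high dX ha).mp haX, (high dZ ha).mp haZ⟩, fun hc =>
        hno ⟨haX, (high dY ha).mpr hc.2⟩⟩
    · rintro ⟨⟨haX, haZ⟩, hno⟩
      refine ⟨⟨(high dX ha).mpr haX, (high dZ ha).mpr haZ⟩, fun hc =>
        hno ⟨haX, (high dY ha).mp hc.2⟩⟩

/-- Proposition 8: if h : 𝒜 → ℬ is a bijection of dense oscillation between AD
families of size κ with cf(κ) > ω, then no homeomorphism Ψ(𝒜) → Ψ(ℬ) extends h. -/

theorem no_homeomorph_extending_dense_oscillation (κ : Cardinal)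
    (hcf : Cardinal.aleph0 < κ.ord.cof)
    (𝒜 ℬ : Set (Set ℕ)) (h𝒜 : ADFamily 𝒜) (hℬ : ADFamily ℬ)
    (hc𝒜 : Cardinal.mk ↥𝒜 = κ) (hcℬ : Cardinal.mk ↥ℬ = κ)
    (h : ↥𝒜 → ↥ℬ) (hbij : Function.Bijective h) (hdo : DenseOscillation κ h) :
    ¬ ∃ H : @Homeomorph (ℕ ⊕ ↥𝒜) (ℕ ⊕ ↥ℬ) (psiTop 𝒜) (psiTop ℬ),
        ∀ A : ↥𝒜, H (Sum.inr A) = Sum.inr (h A) := by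
  letI : TopologicalSpace (ℕ ⊕ ↥𝒜) := psiTop 𝒜
  letI : TopologicalSpace (ℕ ⊕ ↥ℬ) := psiTop ℬ
  rintro ⟨H, hH⟩
  -- Step 1: H maps isolated points to isolated points, yielding a bijection σ : ℕ → ℕ.
  have hinl : ∀ n : ℕ, ∃ m : ℕ, H (Sum.inl n) = Sum.inl m := by
    intro n
    cases hc : H (Sum.inl n) with
    | inl m => exact ⟨m, rfl⟩
    | inr B =>
        obtain ⟨A, rfl⟩ := hbij.2 B
        have : H (Sum.inl n) = H (Sum.inr A) := by rw [hc, hH A]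
        exact absurd (H.injective this) (by simp)
  choose σ hσ using hinl
  have hσinj : Function.Injective σ := by
    intro a b hab
    have : H (Sum.inl a) = H (Sum.inl b) := by rw [hσ a, hσ b, hab]
    exact Sum.inl_injective (H.injective this)
  -- Step 2: for each A, σ '' A and h A agree modulo a finite set.
  have hfinboth : ∀ A : ↥𝒜,
      ((σ '' (A : Set ℕ)) \ (h A : Set ℕ)).Finite ∧
      ((h A : Set ℕ) \ (σ '' (A : Set ℕ))).Finite := by
    intro A
    constructor
    · have hVopen : IsOpen (insert (Sum.inr (h A))
          (Sum.inl '' ((h A : Set ℕ) \ ↑(∅ : Finset ℕ)))) :=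
        TopologicalSpace.isOpen_generateFrom_of_mem (Or.inr ⟨h A, ∅, rfl⟩)
      have hUopen : IsOpen (⇑H ⁻¹' (insert (Sum.inr (h A))
          (Sum.inl '' ((h A : Set ℕ) \ ↑(∅ : Finset ℕ))))) :=
        H.isOpen_preimage.mpr hVopen
      have hmem : Sum.inr A ∈ ⇑H ⁻¹' (insert (Sum.inr (h A))
          (Sum.inl '' ((h A : Set ℕ) \ ↑(∅ : Finset ℕ)))) := by
        simp only [Set.mem_preimage, hH A]
        exact Set.mem_insert _ _
      obtain ⟨F, hF⟩ := psi_nbhd A hUopen hmem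
      refine ((F.finite_toSet.image σ)).subset ?_
      rintro a ⟨⟨b, hbA, rfl⟩, hnot⟩
      by_cases hbF : b ∈ (F : Set ℕ)
      · exact ⟨b, hbF, rfl⟩
      · exfalso
        have hmem2 : H (Sum.inl b) ∈ insert (Sum.inr (h A))
            (Sum.inl '' ((h A : Set ℕ) \ ↑(∅ : Finset ℕ))) := hF ⟨b, ⟨hbA, hbF⟩, rfl⟩
        rw [hσ b] at hmem2
        rcases hmem2 with h1 | h1
        · cases h1
        · rcases h1 with ⟨m, hm, hme⟩
          have hmb : m = σ b := Sum.inl_injective hme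
          exact hnot (hmb ▸ hm.1)
    · have hWopen : IsOpen (insert (Sum.inr A)
          (Sum.inl '' ((A : Set ℕ) \ ↑(∅ : Finset ℕ)))) :=
        TopologicalSpace.isOpen_generateFrom_of_mem (Or.inr ⟨A, ∅, rfl⟩)
      have hUopen : IsOpen (⇑H.symm ⁻¹' (insert (Sum.inr A)
          (Sum.inl '' ((A : Set ℕ) \ ↑(∅ : Finset ℕ))))) :=
        H.symm.isOpen_preimage.mpr hWopen
      have hmem : Sum.inr (h A) ∈ ⇑H.symm ⁻¹' (insert (Sum.inr A)
          (Sum.inl '' ((A : Set ℕ) \ ↑(∅ : Finset ℕ)))) := by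
        have : H.symm (Sum.inr (h A)) = Sum.inr A := by
          rw [← hH A, H.symm_apply_apply]
        simp only [Set.mem_preimage, this]
        exact Set.mem_insert _ _
      obtain ⟨F, hF⟩ := psi_nbhd (h A) hUopen hmem
      refine (F.finite_toSet).subset ?_
      rintro m ⟨hmhA, hnot⟩
      by_contra hmF
      have hmem2 : H.symm (Sum.inl m) ∈ insert (Sum.inr A)
          (Sum.inl '' ((A : Set ℕ) \ ↑(∅ : Finset ℕ))) := hF ⟨m, ⟨hmhA, hmF⟩, rfl⟩
      rcases hmem2 with h1 | h1
      · have : Sum.inl m = H (Sum.inr A) := by rw [← H.apply_symm_apply (Sum.inl m), h1]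
        rw [hH A] at this
        cases this
      · rcases h1 with ⟨k, hk, hke⟩
        have : H (Sum.inl k) = Sum.inl m := by rw [hke, H.apply_symm_apply]
        rw [hσ k] at this
        exact hnot ⟨k, hk.1, Sum.inl_injective this⟩
  -- Step 3: pigeonhole with cf κ > ω.
  set D : ↥𝒜 → Set ℕ := fun A =>
    ((σ '' (A : Set ℕ)) \ (h A : Set ℕ)) ∪ ((h A : Set ℕ) \ (σ '' (A : Set ℕ))) with hD
  have hDfin : ∀ A, (D A).Finite := fun A => ((hfinboth A).1).union ((hfinboth A).2)
  have hexn : ∀ A : ↥𝒜, ∃ n : ℕ, D A ⊆ Set.Iio n := by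
    intro A
    obtain ⟨b, hb⟩ := (hDfin A).bddAbove
    exact ⟨b + 1, fun x hx => Nat.lt_succ_of_le (hb hx)⟩
  choose nA hnA using hexn
  have hfin1 : ∀ A : ↥𝒜, ((σ '' (A : Set ℕ)) ∩ Set.Iio (nA A)).Finite :=
    fun A => (Set.finite_Iio _).subset Set.inter_subset_right
  have hfin2 : ∀ A : ↥𝒜, ((h A : Set ℕ) ∩ Set.Iio (nA A)).Finite :=
    fun A => (Set.finite_Iio _).subset Set.inter_subset_right
  set f : ↥𝒜 → ℕ × Finset ℕ × Finset ℕ :=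
    fun A => (nA A, (hfin1 A).toFinset, (hfin2 A).toFinset) with hf
  obtain ⟨⟨n, s, t⟩, hfib⟩ := exists_big_fiber hcf hc𝒜 f
  obtain ⟨x, hx, y, hy, z, hz, hneq⟩ := hdo (f ⁻¹' {(n, s, t)}) hfib
  -- facts about members of the fiber
  have hfacts : ∀ A : ↥𝒜, A ∈ f ⁻¹' {(n, s, t)} →
      (σ '' (A : Set ℕ)) ∩ Set.Iio n = ↑s ∧ (h A : Set ℕ) ∩ Set.Iio n = ↑t ∧
      (σ '' (A : Set ℕ)) \ Set.Iio n = (h A : Set ℕ) \ Set.Iio n := by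
    intro A hA
    have hfA : f A = (n, s, t) := hA
    rw [hf] at hfA
    have h1 : nA A = n := congrArg Prod.fst hfA
    have h2 : (hfin1 A).toFinset = s := congrArg (fun p => p.2.1) hfA
    have h3 : (hfin2 A).toFinset = t := congrArg (fun p => p.2.2) hfA
    refine ⟨?_, ?_, ?_⟩
    · rw [← h1, ← (hfin1 A).coe_toFinset, h2]
    · rw [← h1, ← (hfin2 A).coe_toFinset, h3]
    · rw [← h1]
      ext a
      constructor <;> rintro ⟨ha1, ha2⟩
      · refine ⟨?_, ha2⟩
        by_contra hc
        exact ha2 (hnA A (Or.inl ⟨ha1, hc⟩))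
      · refine ⟨?_, ha2⟩
        by_contra hc
        exact ha2 (hnA A (Or.inr ⟨ha1, hc⟩))
  obtain ⟨ex1, ex2, ex3⟩ := hfacts x hx
  obtain ⟨ey1, ey2, ey3⟩ := hfacts y hy
  obtain ⟨ez1, ez2, ez3⟩ := hfacts z hz
  apply hneq
  have himg : σ '' (((x : Set ℕ) ∩ (z : Set ℕ)) \ ((x : Set ℕ) ∩ (y : Set ℕ)))
      = ((σ '' (x : Set ℕ)) ∩ (σ '' (z : Set ℕ))) \ ((σ '' (x : Set ℕ)) ∩ (σ '' (y : Set ℕ))) := by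
    rw [Set.image_diff hσinj, Set.image_inter hσinj, Set.image_inter hσinj]
  calc #↥(((x : Set ℕ) ∩ (z : Set ℕ)) \ ((x : Set ℕ) ∩ (y : Set ℕ)))
      = #↥(σ '' (((x : Set ℕ) ∩ (z : Set ℕ)) \ ((x : Set ℕ) ∩ (y : Set ℕ)))) :=
        (Cardinal.mk_image_eq hσinj).symm
    _ = #↥(((σ '' (x : Set ℕ)) ∩ (σ '' (z : Set ℕ))) \
          ((σ '' (x : Set ℕ)) ∩ (σ '' (y : Set ℕ)))) := by rw [himg]
    _ = #↥(((h x : Set ℕ) ∩ (h z : Set ℕ)) \ ((h x : Set ℕ) ∩ (h y : Set ℕ))) := by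
        rw [key_sets ex1 ey1 ez1 ex2 ey2 ez2 ex3 ey3 ez3]
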